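/- There exists m₀ such that for all m ≥ m₀ and all integers k with 1 ≤ k and k < m^{1/3}, the function DISJ^m_k has a (1/10, ⌈(log₂ m)/8⌉)-hitting distribution over its 1-monochromatic rectangles. -/

import Mathlib

set_option maxHeartbeats 1000000


open Finset

/-- The probability, under a distribution `μ` on rectangles `R = R.1 × R.2 ⊆ α × β`,
that the sampled rectangle intersects `X × Y`. -/
noncomputable def hitProb {α β : Type*} [Fintype α] [Fintype β] [DecidableEq α] [DecidableEq β]
    (μ : Finset α × Finset β → ℝ) (X : Finset α) (Y : Finset β) : ℝ :=
  ∑ R ∈ Finset.univ.filter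
      (fun R : Finset α × Finset β => (R.1 ∩ X).Nonempty ∧ (R.2 ∩ Y).Nonempty), μ R

/-- `μ` is a probability distribution on rectangles of `α × β`. -/
def IsDistribution {α β : Type*} [Fintype α] [Fintype β]
    (μ : Finset α × Finset β → ℝ) : Prop :=
  (∀ R, 0 ≤ μ R) ∧ ∑ R, μ R = 1

/-- `μ` is a `(δ, h)`-hitting distribution: every `X × Y` with
`|X| ≥ 2^(−h)·|α|` and `|Y| ≥ 2^(−h)·|β|` is hit with probability at least `1 − δ`. -/
def IsHitting {α β : Type*} [Fintype α] [Fintype β] [DecidableEq α] [DecidableEq β]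
    (μ : Finset α × Finset β → ℝ) (δ : ℝ) (h : ℤ) : Prop :=
  ∀ X : Finset α, ∀ Y : Finset β,
    (2 : ℝ) ^ (-h) * (Fintype.card α : ℝ) ≤ X.card →
    (2 : ℝ) ^ (-h) * (Fintype.card β : ℝ) ≤ Y.card →
    1 - δ ≤ hitProb μ X Y

/-- The set of `k`-element subsets of `{1,…,m}`, the common domain of both inputs of
`DISJ^m_k`. -/
abbrev KSubset (m k : ℕ) := {s : Finset (Fin m) // s.card = k}

lemma card_supersets {α : Type*} [Fintype α] [DecidableEq α] (t : Finset α) :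
    (univ.filter (fun A : Finset α => t ⊆ A)).card = 2 ^ (Fintype.card α - t.card) := by
  rw [← Finset.card_compl t, ← Finset.card_powerset]
  apply Finset.card_bij' (fun A _ => A \ t) (fun B _ => B ∪ t)
  · intro A hA
    simp only [mem_filter, mem_univ, true_and] at hA
    simp only [mem_powerset]
    intro x hx
    simp only [mem_sdiff] at hx
    simp [hx.2]
  · intro B hB
    simp
  · intro A hA
    simp only [mem_filter, mem_univ, true_and] at hA
    exact Finset.sdiff_union_of_subset hA
  · intro B hB
    simp only [mem_powerset] at hB
    apply Finset.union_sdiff_cancel_right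
    exact Finset.disjoint_left.2 fun x hx => by simpa using hB hx

lemma card_ksupersets {α : Type*} [Fintype α] [DecidableEq α] {k : ℕ} (s : Finset α)
    (hs : s.card ≤ k) :
    (univ.filter (fun a : {t : Finset α // t.card = k} => s ⊆ a.1)).card
      = (Fintype.card α - s.card).choose (k - s.card) := by
  rw [← Finset.card_compl s, ← Finset.card_powersetCard (k - s.card) sᶜ]
  apply Finset.card_bij' (fun a _ => a.1 \ s)
    (fun B hB => ⟨B ∪ s, by
      simp only [mem_powersetCard] at hB
      rw [Finset.card_union_of_disjoint, hB.2]
      · omega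
      · exact Finset.disjoint_left.2 fun x hx => by simpa using hB.1 hx⟩)
  case hi =>
    intro a ha
    simp only [mem_filter, mem_univ, true_and] at ha
    simp only [mem_powersetCard]
    refine ⟨fun x hx => ?_, ?_⟩
    · simp only [mem_sdiff] at hx; simpa using hx.2
    · rw [Finset.card_sdiff_of_subset ha, a.2]
  case hj =>
    intro B hB
    simp only [mem_filter, mem_univ, true_and]
    exact Finset.subset_union_right
  case left_inv =>
    intro a ha
    simp only [mem_filter, mem_univ, true_and] at ha
    exact Subtype.ext (Finset.sdiff_union_of_subset ha)
  case right_inv =>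
    intro B hB
    simp only [mem_powersetCard] at hB
    apply Finset.union_sdiff_cancel_right
    exact Finset.disjoint_left.2 fun x hx => by simpa using hB.1 hx

lemma choose_sub_le (m k : ℕ) (hk : k ≤ m) :
    ∀ j, j ≤ k → (m - j).choose (k - j) * m ^ j ≤ m.choose k * k ^ j := by
  intro j
  induction j with
  | zero => simp
  | succ j ih =>
    intro hj
    have hj' : j ≤ k := by omega
    have key : (m - (j+1)).choose (k - (j+1)) * m ≤ (m - j).choose (k - j) * k := by
      set n := m - j with hn
      set r := k - j with hr
      have hn1 : 1 ≤ n := by omega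
      have hr1 : 1 ≤ r := by omega
      have hid : n * (n-1).choose (r-1) = n.choose r * r := by
        have : (n-1).succ * (n-1).choose (r-1) = (n-1).succ.choose (r-1).succ * (r-1).succ := Nat.add_one_mul_choose_eq (n-1) (r-1)
        have h1 : (n-1).succ = n := by omega
        have h2 : (r-1).succ = r := by omega
        rw [h1, h2] at this
        exact this
      have hrm : r * m ≤ k * n := by
        have : k * j ≤ j * m := by
          calc k * j ≤ m * j := Nat.mul_le_mul_right j hk
          _ = j * m := Nat.mul_comm m j
        calc r * m = (k - j) * m := rfl
        _ = k * m - j * m := by rw [Nat.sub_mul]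
        _ ≤ k * m - k * j := by omega
        _ = k * (m - j) := by rw [Nat.mul_sub]
        _ = k * n := rfl
      have h3 : (m - (j+1)) = n - 1 := by omega
      have h4 : (k - (j+1)) = r - 1 := by omega
      rw [h3, h4]
      have : n * ((n-1).choose (r-1) * m) ≤ n * (n.choose r * k) := by
        calc n * ((n-1).choose (r-1) * m) = (n * (n-1).choose (r-1)) * m := by ring
        _ = (n.choose r * r) * m := by rw [hid]
        _ = n.choose r * (r * m) := by ring
        _ ≤ n.choose r * (k * n) := Nat.mul_le_mul_left _ hrm
        _ = n * (n.choose r * k) := by ring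
      exact Nat.le_of_mul_le_mul_left this (by omega)
    calc (m - (j+1)).choose (k - (j+1)) * m ^ (j+1)
        = ((m - (j+1)).choose (k - (j+1)) * m) * m ^ j := by ring
      _ ≤ ((m - j).choose (k - j) * k) * m ^ j := Nat.mul_le_mul_right _ key
      _ = ((m - j).choose (k - j) * m ^ j) * k := by ring
      _ ≤ (m.choose k * k ^ j) * k := Nat.mul_le_mul_right _ (ih hj')
      _ = m.choose k * k ^ (j+1) := by ring

lemma sum_two_pow_inter {α : Type*} [Fintype α] [DecidableEq α] {k : ℕ} (a : Finset α)
    (ha : a.card = k) :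
    ∑ b : {t : Finset α // t.card = k}, 2 ^ (a ∩ b.1).card
      = ∑ j ∈ range (k+1), k.choose j * (Fintype.card α - j).choose (k - j) := by
  have step1 : ∀ b : {t : Finset α // t.card = k},
      2 ^ (a ∩ b.1).card = ∑ s ∈ a.powerset, if s ⊆ b.1 then 1 else 0 := by
    intro b
    rw [← Finset.card_filter, ← Finset.card_powerset]
    congr 1
    ext s
    simp only [Finset.mem_powerset, Finset.mem_filter, Finset.subset_inter_iff]
  calc ∑ b : {t : Finset α // t.card = k}, 2 ^ (a ∩ b.1).card
      = ∑ b : {t : Finset α // t.card = k}, ∑ s ∈ a.powerset,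
          if s ⊆ b.1 then 1 else 0 := by
        exact Finset.sum_congr rfl fun b _ => step1 b
    _ = ∑ s ∈ a.powerset, (univ.filter (fun b : {t : Finset α // t.card = k} => s ⊆ b.1)).card := by
        rw [Finset.sum_comm]
        exact Finset.sum_congr rfl fun s _ => (Finset.card_filter _ _).symm
    _ = ∑ s ∈ a.powerset, (Fintype.card α - s.card).choose (k - s.card) := by
        refine Finset.sum_congr rfl fun s hs => ?_
        exact card_ksupersets s (ha ▸ Finset.card_le_card (Finset.mem_powerset.1 hs))
    _ = ∑ j ∈ range (a.card + 1), ∑ s ∈ Finset.powersetCard j a,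
          (Fintype.card α - s.card).choose (k - s.card) := Finset.sum_powerset a _
    _ = ∑ j ∈ range (k+1), k.choose j * (Fintype.card α - j).choose (k - j) := by
        rw [ha]
        refine Finset.sum_congr rfl fun j hj => ?_
        have : ∀ s ∈ Finset.powersetCard j a,
            (Fintype.card α - s.card).choose (k - s.card)
              = (Fintype.card α - j).choose (k - j) := by
          intro s hs
          rw [(Finset.mem_powersetCard.1 hs).2]
        rw [Finset.sum_congr rfl this, Finset.sum_const, Finset.card_powersetCard, ha,
          smul_eq_mul]

lemma half_geom_le_two (n : ℕ) : ∑ j ∈ Finset.range n, (1/2:ℝ)^j ≤ 2 := by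
  have h := geom_sum_eq (by norm_num : (1/2:ℝ) ≠ 1) n
  rw [h]
  have : (0:ℝ) ≤ (1/2:ℝ)^n := by positivity
  rw [div_le_iff_of_neg (by norm_num : (1/2:ℝ) - 1 < 0)]
  linarith

-- real-valued bound on the pair sum

lemma pair_sum_bound {m k : ℕ} (hk1 : 1 ≤ k) (hk3 : k ^ 3 < m)
    (a : Finset (Fin m)) (ha : a.card = k) :
    ∑ b : {t : Finset (Fin m) // t.card = k}, (2:ℝ) ^ (a ∩ b.1).card
      ≤ (m.choose k : ℝ) * (1 + 4 * k ^ 2 / m) := by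
  have hkm : k ≤ m :=
    le_of_lt (lt_of_le_of_lt (Nat.le_self_pow (by norm_num) k) hk3)
  have hm0 : (0:ℝ) < m := by
    have h1 : 1 ≤ m := le_trans hk1 hkm
    exact_mod_cast Nat.lt_of_lt_of_le Nat.zero_lt_one h1
  -- cast the nat identity
  have hnat := sum_two_pow_inter (k := k) a ha
  rw [Fintype.card_fin] at hnat
  have hcast : ∑ b : {t : Finset (Fin m) // t.card = k}, (2:ℝ) ^ (a ∩ b.1).card
      = ∑ j ∈ range (k+1), ((k.choose j * (m - j).choose (k - j) : ℕ) : ℝ) := by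
    exact_mod_cast congrArg (Nat.cast : ℕ → ℝ) hnat
  rw [hcast]
  -- peel off the j = 0 term
  rw [Finset.sum_range_succ']
  have h0 : ((k.choose 0 * (m - 0).choose (k - 0) : ℕ) : ℝ) = (m.choose k : ℝ) := by
    simp
  rw [h0]
  have hr : (k:ℝ)^2 / m ≤ 1/2 := by
    rw [div_le_iff₀ hm0]
    have h2 : 2 * k^2 ≤ m := by
      rcases Nat.lt_or_ge k 2 with h | h
      · have hk : k = 1 := by omega
        subst hk
        simp at hk3; omega
      · calc 2 * k^2 ≤ k * k^2 := Nat.mul_le_mul_right _ h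
          _ = k^3 := by ring
          _ ≤ m := le_of_lt hk3
    have h2' : 2 * (k:ℝ)^2 ≤ m := by exact_mod_cast h2
    linarith
  have hterm : ∀ j ∈ range k, ((k.choose (j+1) * (m - (j+1)).choose (k - (j+1)) : ℕ) : ℝ)
      ≤ (m.choose k : ℝ) * ((k:ℝ)^2/m) * (1/2)^j := by
    intro j hj
    have hjk : j + 1 ≤ k := by simpa using Nat.succ_le_of_lt (Finset.mem_range.1 hj)
    -- nat bound: term * m^(j+1) ≤ choose m k * (k^2)^(j+1)
    have hn1 : k.choose (j+1) ≤ k ^ (j+1) := Nat.choose_le_pow k (j+1)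
    have hn2 := choose_sub_le m k hkm (j+1) hjk
    have hnatb : k.choose (j+1) * (m - (j+1)).choose (k - (j+1)) * m ^ (j+1)
        ≤ m.choose k * (k^2) ^ (j+1) := by
      calc k.choose (j+1) * (m - (j+1)).choose (k - (j+1)) * m ^ (j+1)
          = k.choose (j+1) * ((m - (j+1)).choose (k - (j+1)) * m ^ (j+1)) := by ring
        _ ≤ k ^ (j+1) * (m.choose k * k ^ (j+1)) := Nat.mul_le_mul hn1 hn2
        _ = m.choose k * (k^2) ^ (j+1) := by ring
    -- to ℝ
    have hmr : (0:ℝ) < (m:ℝ) ^ (j+1) := by positivity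
    rw [← mul_le_mul_iff_of_pos_right hmr]
    calc ((k.choose (j+1) * (m - (j+1)).choose (k - (j+1)) : ℕ) : ℝ) * (m:ℝ)^(j+1)
        = ((k.choose (j+1) * (m - (j+1)).choose (k - (j+1)) * m ^ (j+1) : ℕ) : ℝ) := by
          push_cast; ring
      _ ≤ ((m.choose k * (k^2) ^ (j+1) : ℕ) : ℝ) := by exact_mod_cast hnatb
      _ = (m.choose k : ℝ) * ((k:ℝ)^2)^(j+1) := by push_cast; ring
      _ = ((m.choose k : ℝ) * ((k:ℝ)^2/m) * ((k:ℝ)^2/m)^j) * (m:ℝ)^(j+1) := by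
          have e : ((m:ℝ)^j)⁻¹ * (m:ℝ)^j = 1 := inv_mul_cancel₀ (pow_ne_zero _ hm0.ne')
          have e2 : (m:ℝ)⁻¹ * m = 1 := inv_mul_cancel₀ hm0.ne'
          linear_combination (-((m.choose k : ℝ) * ((k:ℝ)^2)^(j+1)) * ((m:ℝ)⁻¹ * m)) * e
            + (-((m.choose k : ℝ) * ((k:ℝ)^2)^(j+1))) * e2
      _ ≤ ((m.choose k : ℝ) * ((k:ℝ)^2/m) * (1/2)^j) * (m:ℝ)^(j+1) := by
          apply mul_le_mul_of_nonneg_right _ (le_of_lt hmr)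
          apply mul_le_mul_of_nonneg_left _ (by positivity)
          exact pow_le_pow_left₀ (by positivity) hr j
  calc (∑ j ∈ range k, ((k.choose (j+1) * (m - (j+1)).choose (k - (j+1)) : ℕ) : ℝ))
        + (m.choose k : ℝ)
      ≤ (∑ j ∈ range k, (m.choose k : ℝ) * ((k:ℝ)^2/m) * (1/2)^j) + (m.choose k : ℝ) :=
        add_le_add_left (Finset.sum_le_sum hterm) _
    _ = (m.choose k : ℝ) * ((k:ℝ)^2/m) * (∑ j ∈ range k, (1/2:ℝ)^j) + (m.choose k : ℝ) := by
        rw [← Finset.mul_sum]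
    _ ≤ (m.choose k : ℝ) * ((k:ℝ)^2/m) * 2 + (m.choose k : ℝ) := by
        apply add_le_add_left
        apply mul_le_mul_of_nonneg_left _ (by positivity)
        exact half_geom_le_two k
    _ ≤ (m.choose k : ℝ) * (1 + 4 * (k:ℝ) ^ 2 / m) := by
        have hC : (0:ℝ) ≤ (m.choose k : ℝ) := by positivity
        have hq : (0:ℝ) ≤ (k:ℝ)^2/m := by positivity
        have h4 : 4 * (k:ℝ)^2/m = 4 * ((k:ℝ)^2/m) := by ring
        rw [h4]
        nlinarith [mul_nonneg hC hq]

lemma numeric_bound {m k : ℕ} (hk1 : 1 ≤ k) (hk3 : k ^ 3 < m) (hm : 2 ^ 50 ≤ m) :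
    4 * (k:ℝ) ^ 2 / m * (2 * (m:ℝ) ^ ((1:ℝ)/8)) ≤ 1 / 19 := by
  have hm0 : (0:ℝ) < m := by
    have : (0:ℕ) < m := by positivity
    exact_mod_cast this
  -- k ≤ m^(1/3)
  have hk3' : (k:ℝ)^3 ≤ (m:ℝ) := by exact_mod_cast le_of_lt hk3
  have hkle : (k:ℝ) ≤ (m:ℝ) ^ ((1:ℝ)/3) := by
    have h1 : ((k:ℝ)^(3:ℕ)) ^ ((1:ℝ)/3) ≤ (m:ℝ) ^ ((1:ℝ)/3) :=
      Real.rpow_le_rpow (by positivity) hk3' (by norm_num)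
    have h2 : ((k:ℝ)^(3:ℕ)) ^ ((1:ℝ)/3) = (k:ℝ) := by
      rw [← Real.rpow_natCast (k:ℝ) 3, ← Real.rpow_mul (by positivity)]
      norm_num
    rwa [h2] at h1
  have hk2 : (k:ℝ)^2 ≤ (m:ℝ) ^ ((2:ℝ)/3) := by
    have h1 : (k:ℝ)^2 ≤ ((m:ℝ) ^ ((1:ℝ)/3))^(2:ℕ) := by
      apply pow_le_pow_left₀ (by positivity) hkle
    have h2 : ((m:ℝ) ^ ((1:ℝ)/3))^(2:ℕ) = (m:ℝ) ^ ((2:ℝ)/3) := by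
      rw [← Real.rpow_natCast ((m:ℝ) ^ ((1:ℝ)/3)) 2, ← Real.rpow_mul (le_of_lt hm0)]
      norm_num
    rwa [h2] at h1
  -- m^(5/24) ≥ 152
  have h524 : (152:ℝ) ≤ (m:ℝ) ^ ((5:ℝ)/24) := by
    have hm' : ((2:ℝ)^(50:ℕ)) ≤ (m:ℝ) := by exact_mod_cast hm
    have h1 : ((2:ℝ)^(50:ℕ)) ^ ((5:ℝ)/24) ≤ (m:ℝ) ^ ((5:ℝ)/24) :=
      Real.rpow_le_rpow (by positivity) hm' (by norm_num)
    have h2 : ((2:ℝ)^(50:ℕ)) ^ ((5:ℝ)/24) = (2:ℝ) ^ ((250:ℝ)/24) := by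
      rw [← Real.rpow_natCast (2:ℝ) 50, ← Real.rpow_mul (by norm_num)]
      norm_num
    have h3 : (2:ℝ) ^ ((8:ℝ)) ≤ (2:ℝ) ^ ((250:ℝ)/24) :=
      Real.rpow_le_rpow_of_exponent_le (by norm_num) (by norm_num)
    have h4 : (2:ℝ) ^ ((8:ℝ)) = 256 := by
      rw [show ((8:ℝ)) = ((8:ℕ):ℝ) by norm_num, Real.rpow_natCast]
      norm_num
    nlinarith
  -- combine: need 8 * k^2 * m^(1/8) ≤ m/19, i.e. 152 k^2 ≤ m^(7/8)
  have hsplit : (m:ℝ) = (m:ℝ) ^ ((7:ℝ)/8) * (m:ℝ) ^ ((1:ℝ)/8) := by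
    rw [← Real.rpow_add hm0]
    norm_num
  have hsplit2 : (m:ℝ) ^ ((7:ℝ)/8) = (m:ℝ) ^ ((2:ℝ)/3) * (m:ℝ) ^ ((5:ℝ)/24) := by
    rw [← Real.rpow_add hm0]
    norm_num
  have hmain : 152 * (k:ℝ)^2 ≤ (m:ℝ) ^ ((7:ℝ)/8) := by
    rw [hsplit2]
    calc 152 * (k:ℝ)^2 ≤ 152 * (m:ℝ) ^ ((2:ℝ)/3) := by nlinarith
      _ ≤ (m:ℝ) ^ ((2:ℝ)/3) * (m:ℝ) ^ ((5:ℝ)/24) := by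
          rw [mul_comm]
          apply mul_le_mul_of_nonneg_left h524 (by positivity)
  rw [div_mul_eq_mul_div, div_le_div_iff₀ hm0 (by norm_num)]
  have h18 : (0:ℝ) < (m:ℝ) ^ ((1:ℝ)/8) := by positivity
  calc 4 * (k:ℝ)^2 * (2 * (m:ℝ) ^ ((1:ℝ)/8)) * 19
      = (152 * (k:ℝ)^2) * (m:ℝ) ^ ((1:ℝ)/8) := by ring
    _ ≤ (m:ℝ) ^ ((7:ℝ)/8) * (m:ℝ) ^ ((1:ℝ)/8) := by
        apply mul_le_mul_of_nonneg_right hmain (le_of_lt h18)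
    _ = (m:ℝ) := hsplit.symm
    _ = (m:ℝ) * 1 := (mul_one _).symm
    _ ≤ 1 * (m:ℝ) := by linarith

lemma key_count {m k : ℕ} (hk1 : 1 ≤ k) (hk3 : k ^ 3 < m) (hm : 2 ^ 50 ≤ m)
    (X : Finset (KSubset m k))
    (hX : (m.choose k : ℝ) ≤ 2 * (m:ℝ) ^ ((1:ℝ)/8) * X.card) :
    (19/20 : ℝ) * 2 ^ m
      ≤ ((univ.filter (fun A : Finset (Fin m) => ∃ a ∈ X, a.1 ⊆ A)).card : ℝ) := by
  have hkm : k ≤ m := le_of_lt (lt_of_le_of_lt (Nat.le_self_pow (by norm_num) k) hk3)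
  have h2km : 2 * k ≤ m := by
    rcases Nat.lt_or_ge k 2 with h | h
    · have hk : k = 1 := by omega
      subst hk; simp at hk3; omega
    · calc 2 * k ≤ k * k := Nat.mul_le_mul_right _ h
        _ ≤ k * k * k := Nat.le_mul_of_pos_right _ (by omega)
        _ = k ^ 3 := by ring
        _ ≤ m := le_of_lt hk3
  have hm0 : (0:ℝ) < m := by
    have : (0:ℕ) < m := by omega
    exact_mod_cast this
  have hXpos : (0:ℝ) < X.card := by
    by_contra hcon
    push_neg at hcon
    have hX0 : (X.card : ℝ) = 0 := le_antisymm hcon (by positivity)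
    rw [hX0, mul_zero] at hX
    have : 0 < m.choose k := Nat.choose_pos hkm
    have : (0:ℝ) < (m.choose k : ℝ) := by exact_mod_cast this
    linarith
  set N : Finset (Fin m) → ℕ := fun A => (X.filter (fun a => a.1 ⊆ A)).card with hN
  -- first moment
  have hS1 : ∑ A : Finset (Fin m), (N A : ℝ) = X.card * 2 ^ (m - k) := by
    have hnat : ∑ A : Finset (Fin m), N A = X.card * 2 ^ (m - k) := by
      have : ∀ A : Finset (Fin m), N A = ∑ a ∈ X, if a.1 ⊆ A then 1 else 0 := fun A =>
        Finset.card_filter _ _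
      rw [Finset.sum_congr rfl fun A _ => this A, Finset.sum_comm]
      have hrow : ∀ a ∈ X, (∑ A : Finset (Fin m), if a.1 ⊆ A then 1 else 0) = 2 ^ (m - k) := by
        intro a _
        rw [← Finset.card_filter]
        have := card_supersets (α := Fin m) a.1
        rwa [Fintype.card_fin, a.2] at this
      rw [Finset.sum_congr rfl hrow, Finset.sum_const, smul_eq_mul]
    exact_mod_cast congrArg (Nat.cast : ℕ → ℝ) hnat
  -- second moment
  have hS2 : ∑ A : Finset (Fin m), (N A : ℝ) ^ 2
      ≤ (20/19) * X.card ^ 2 * 2 ^ (m - 2 * k) := by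
    have hnat : ∑ A : Finset (Fin m), (N A) ^ 2
        = ∑ a ∈ X, ∑ b ∈ X, 2 ^ (m - (a.1 ∪ b.1).card) := by
      have hsq : ∀ A : Finset (Fin m),
          (N A) ^ 2 = ∑ a ∈ X, ∑ b ∈ X, if a.1 ∪ b.1 ⊆ A then 1 else 0 := by
        intro A
        have h1 : N A = ∑ a ∈ X, if a.1 ⊆ A then 1 else 0 := Finset.card_filter _ _
        rw [h1, sq, Finset.sum_mul_sum]
        refine Finset.sum_congr rfl fun a _ => Finset.sum_congr rfl fun b _ => ?_
        by_cases ha : a.1 ⊆ A <;> by_cases hb : b.1 ⊆ A <;>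
          simp [ha, hb, Finset.union_subset_iff]
      rw [Finset.sum_congr rfl fun A _ => hsq A, Finset.sum_comm]
      refine Finset.sum_congr rfl fun a _ => ?_
      rw [Finset.sum_comm]
      refine Finset.sum_congr rfl fun b _ => ?_
      rw [← Finset.card_filter]
      have := card_supersets (α := Fin m) (a.1 ∪ b.1)
      rwa [Fintype.card_fin] at this
    have hexp : ∀ a b : KSubset m k,
        (2:ℝ) ^ (m - (a.1 ∪ b.1).card) = 2 ^ (m - 2*k) * 2 ^ (a.1 ∩ b.1).card := by
      intro a b
      rw [← pow_add]
      congr 1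
      have hub : (a.1 ∪ b.1).card + (a.1 ∩ b.1).card = 2 * k := by
        have := Finset.card_union_add_card_inter a.1 b.1
        rw [a.2, b.2] at this
        omega
      have hle : (a.1 ∪ b.1).card ≤ m := by
        calc (a.1 ∪ b.1).card ≤ Fintype.card (Fin m) := Finset.card_le_univ _
          _ = m := Fintype.card_fin m
      omega
    have hcast : ∑ A : Finset (Fin m), (N A : ℝ) ^ 2
        = ∑ a ∈ X, ∑ b ∈ X, (2:ℝ) ^ (m - (a.1 ∪ b.1).card) := by
      exact_mod_cast congrArg (Nat.cast : ℕ → ℝ) hnat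
    rw [hcast]
    rw [Finset.sum_congr rfl fun a _ => Finset.sum_congr rfl fun b _ => hexp a b]
    -- now bound the inner pair sum
    have hC : (((Finset.univ : Finset (KSubset m k))).card : ℝ) = (m.choose k : ℝ) := by
      rw [Finset.card_univ]
      rw [show Fintype.card (KSubset m k) = (Fintype.card (Fin m)).choose k from
        Fintype.card_finset_len k, Fintype.card_fin]
    have hnonneg : ∀ a b : KSubset m k, (0:ℝ) ≤ (2:ℝ) ^ (a.1 ∩ b.1).card - 1 := by
      intro a b
      have : (1:ℝ) ≤ 2 ^ (a.1 ∩ b.1).card := one_le_pow₀ (by norm_num)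
      linarith
    have hinner : ∀ a : KSubset m k,
        ∑ b ∈ X, (2:ℝ) ^ (a.1 ∩ b.1).card ≤ (20/19) * X.card := by
      intro a
      have hstep1 : ∑ b ∈ X, (2:ℝ) ^ (a.1 ∩ b.1).card
          = X.card + ∑ b ∈ X, ((2:ℝ) ^ (a.1 ∩ b.1).card - 1) := by
        rw [Finset.sum_sub_distrib, Finset.sum_const, nsmul_eq_mul, mul_one]
        ring
      have hstep2 : ∑ b ∈ X, ((2:ℝ) ^ (a.1 ∩ b.1).card - 1)
          ≤ ∑ b : KSubset m k, ((2:ℝ) ^ (a.1 ∩ b.1).card - 1) :=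
        Finset.sum_le_sum_of_subset_of_nonneg (Finset.subset_univ X)
          (fun b _ _ => hnonneg a b)
      have hstep3 : ∑ b : KSubset m k, ((2:ℝ) ^ (a.1 ∩ b.1).card - 1)
          ≤ 4 * (k:ℝ)^2 / m * (m.choose k : ℝ) := by
        rw [Finset.sum_sub_distrib, Finset.sum_const, nsmul_eq_mul, mul_one, hC]
        have := pair_sum_bound hk1 hk3 a.1 a.2
        nlinarith [this]
      have hstep4 : 4 * (k:ℝ)^2 / m * (m.choose k : ℝ) ≤ (1/19) * X.card := by
        calc 4 * (k:ℝ)^2 / m * (m.choose k : ℝ)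
            ≤ 4 * (k:ℝ)^2 / m * (2 * (m:ℝ) ^ ((1:ℝ)/8) * X.card) := by
              apply mul_le_mul_of_nonneg_left hX (by positivity)
          _ = (4 * (k:ℝ)^2 / m * (2 * (m:ℝ) ^ ((1:ℝ)/8))) * X.card := by ring
          _ ≤ (1/19) * X.card := by
              apply mul_le_mul_of_nonneg_right (numeric_bound hk1 hk3 hm) (le_of_lt hXpos)
      rw [hstep1]
      linarith
    calc ∑ a ∈ X, ∑ b ∈ X, (2:ℝ) ^ (m - 2*k) * 2 ^ (a.1 ∩ b.1).card
        = (2:ℝ) ^ (m - 2*k) * ∑ a ∈ X, ∑ b ∈ X, (2:ℝ) ^ (a.1 ∩ b.1).card := by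
          rw [Finset.mul_sum]
          exact Finset.sum_congr rfl fun a _ => (Finset.mul_sum _ _ _).symm
      _ ≤ (2:ℝ) ^ (m - 2*k) * ∑ a ∈ X, (20/19) * (X.card : ℝ) := by
          apply mul_le_mul_of_nonneg_left _ (by positivity)
          exact Finset.sum_le_sum fun a _ => hinner a
      _ = (20/19) * X.card ^ 2 * 2 ^ (m - 2 * k) := by
          rw [Finset.sum_const, nsmul_eq_mul]
          ring
  -- Cauchy-Schwarz / Paley-Zygmund step
  set G := univ.filter (fun A : Finset (Fin m) => ∃ a ∈ X, a.1 ⊆ A) with hG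
  have hsupp : ∑ A ∈ G, (N A : ℝ) = ∑ A : Finset (Fin m), (N A : ℝ) := by
    apply Finset.sum_filter_of_ne
    intro A _ hNA
    have hne : (X.filter (fun a => a.1 ⊆ A)).card ≠ 0 := by
      intro h0
      apply hNA
      rw [hN]
      simp [h0]
    obtain ⟨a, ha⟩ := Finset.card_ne_zero.1 hne
    rw [Finset.mem_filter] at ha
    exact ⟨a, ha.1, ha.2⟩
  have hCS : (∑ A ∈ G, (N A : ℝ)) ^ 2 ≤ (G.card : ℝ) * ∑ A ∈ G, (N A : ℝ) ^ 2 := by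
    have h := Finset.sum_mul_sq_le_sq_mul_sq G (fun _ => (1:ℝ)) (fun A => (N A : ℝ))
    simpa using h
  have hle : (∑ A ∈ G, (N A : ℝ) ^ 2) ≤ ∑ A : Finset (Fin m), (N A : ℝ) ^ 2 :=
    Finset.sum_le_sum_of_subset_of_nonneg (Finset.filter_subset _ _)
      (fun A _ _ => by positivity)
  have hmain : ((X.card : ℝ) * 2 ^ (m - k)) ^ 2
      ≤ (G.card : ℝ) * ((20/19) * X.card ^ 2 * 2 ^ (m - 2 * k)) := by
    calc ((X.card : ℝ) * 2 ^ (m - k)) ^ 2 = (∑ A ∈ G, (N A : ℝ)) ^ 2 := by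
          rw [hsupp, hS1]
      _ ≤ (G.card : ℝ) * ∑ A ∈ G, (N A : ℝ) ^ 2 := hCS
      _ ≤ (G.card : ℝ) * ∑ A : Finset (Fin m), (N A : ℝ) ^ 2 := by
          apply mul_le_mul_of_nonneg_left hle (by positivity)
      _ ≤ (G.card : ℝ) * ((20/19) * X.card ^ 2 * 2 ^ (m - 2 * k)) := by
          apply mul_le_mul_of_nonneg_left hS2 (by positivity)
  have hpow : (2:ℝ) ^ (m - k) * 2 ^ (m - k) = 2 ^ (m - 2*k) * 2 ^ m := by
    rw [← pow_add, ← pow_add]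
    congr 1
    omega
  have hd : (0:ℝ) < X.card ^ 2 * 2 ^ (m - 2*k) := by positivity
  have h2m : (2:ℝ) ^ m ≤ (20/19) * G.card := by
    have hexpand : (X.card ^ 2 * 2 ^ (m - 2*k)) * (2:ℝ) ^ m
        ≤ (X.card ^ 2 * 2 ^ (m - 2*k)) * ((20/19) * G.card) := by
      calc (X.card ^ 2 * 2 ^ (m - 2*k)) * (2:ℝ) ^ m
          = ((X.card : ℝ) * 2 ^ (m - k)) ^ 2 := by
            rw [sq, sq]
            rw [show ((X.card:ℝ) * 2^(m-k)) * ((X.card:ℝ) * 2^(m-k))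
              = (X.card:ℝ) * (X.card:ℝ) * ((2:ℝ)^(m-k) * 2^(m-k)) by ring, hpow]
            ring
        _ ≤ (G.card : ℝ) * ((20/19) * X.card ^ 2 * 2 ^ (m - 2 * k)) := hmain
        _ = (X.card ^ 2 * 2 ^ (m - 2*k)) * ((20/19) * G.card) := by ring
    exact le_of_mul_le_mul_left hexpand hd
  linarith


/-- There exists `m₀` such that for all `m ≥ m₀` and all integers `k`
with `1 ≤ k` and `k < m^(1/3)`, the function `DISJ^m_k` has a
`(1/10, ⌈(log₂ m)/8⌉)`-hitting distribution over its 1-monochromatic rectangles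
(rectangles on which the two subsets are always disjoint). -/
theorem disjointness_one_hitting :
    ∃ m₀ : ℕ, ∀ m : ℕ, m₀ ≤ m → ∀ k : ℕ, 1 ≤ k → (k : ℝ) < (m : ℝ) ^ ((1 : ℝ) / 3) →
      ∃ μ : Finset (KSubset m k) × Finset (KSubset m k) → ℝ,
        IsDistribution μ ∧
        (∀ R, μ R ≠ 0 → ∀ a ∈ R.1, ∀ b ∈ R.2, a.1 ∩ b.1 = ∅) ∧
        IsHitting μ (1 / 10) ⌈Real.logb 2 (m : ℝ) / 8⌉ := by
  refine ⟨2 ^ 50, fun m hm k hk1 hkm => ?_⟩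
  have hm0 : (0:ℝ) < m := by
    have : (0:ℕ) < m := lt_of_lt_of_le (by norm_num) hm
    exact_mod_cast this
  -- k^3 < m
  have hk3 : k ^ 3 < m := by
    have h1 : ((k:ℝ)) ^ (3:ℕ) < ((m:ℝ) ^ ((1:ℝ)/3)) ^ (3:ℕ) := by
      apply pow_lt_pow_left₀ hkm (by positivity)
      norm_num
    have h2 : ((m:ℝ) ^ ((1:ℝ)/3)) ^ (3:ℕ) = (m:ℝ) := by
      rw [← Real.rpow_natCast ((m:ℝ) ^ ((1:ℝ)/3)) 3, ← Real.rpow_mul (le_of_lt hm0)]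
      norm_num
    rw [h2] at h1
    exact_mod_cast h1
  -- the distribution
  set f : Finset (Fin m) → Finset (KSubset m k) × Finset (KSubset m k) :=
    fun A => (univ.filter (fun a : KSubset m k => a.1 ⊆ A),
              univ.filter (fun b : KSubset m k => b.1 ⊆ Aᶜ)) with hf
  set μ : Finset (KSubset m k) × Finset (KSubset m k) → ℝ :=
    fun R => ((univ.filter (fun A : Finset (Fin m) => f A = R)).card : ℝ) / 2 ^ m with hμ
  have h2m : (0:ℝ) < 2 ^ m := by positivity
  have hfibers : ∑ R : Finset (KSubset m k) × Finset (KSubset m k),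
      ((univ.filter (fun A : Finset (Fin m) => f A = R)).card) = 2 ^ m := by
    have := (Finset.card_eq_sum_card_fiberwise
      (f := f) (s := (univ : Finset (Finset (Fin m)))) (t := univ)
      (fun A _ => Finset.mem_univ _))
    rw [Finset.card_univ, Fintype.card_finset, Fintype.card_fin] at this
    exact this.symm
  refine ⟨μ, ⟨fun R => by positivity, ?_⟩, ?_, ?_⟩
  · -- sums to 1
    rw [hμ]
    rw [← Finset.sum_div]
    rw [show ∑ R : Finset (KSubset m k) × Finset (KSubset m k),
        (((univ.filter (fun A : Finset (Fin m) => f A = R)).card : ℕ) : ℝ)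
        = ((2:ℝ) ^ m) from by exact_mod_cast congrArg (Nat.cast : ℕ → ℝ) hfibers]
    exact div_self (ne_of_gt h2m)
  · -- monochromatic
    intro R hR a ha b hb
    have hne : (univ.filter (fun A : Finset (Fin m) => f A = R)).Nonempty := by
      rw [← Finset.card_pos]
      by_contra hc
      push_neg at hc
      have : (univ.filter (fun A : Finset (Fin m) => f A = R)).card = 0 := by omega
      apply hR
      rw [hμ]
      simp [this]
    obtain ⟨A, hA⟩ := hne
    rw [Finset.mem_filter] at hA
    have hfA : f A = R := hA.2
    rw [← hfA] at ha hb
    simp only [hf, Finset.mem_filter, Finset.mem_univ, true_and] at ha hb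
    have hd : Disjoint a.1 b.1 :=
      Disjoint.mono ha hb (disjoint_compl_right : Disjoint A Aᶜ)
    exact Finset.disjoint_iff_inter_eq_empty.1 hd
  · -- hitting
    intro X Y hXc hYc
    set h : ℤ := ⌈Real.logb 2 (m : ℝ) / 8⌉ with hh
    -- convert the cardinality hypotheses
    have hcard : (Fintype.card (KSubset m k) : ℝ) = (m.choose k : ℝ) := by
      rw [show Fintype.card (KSubset m k) = (Fintype.card (Fin m)).choose k from
        Fintype.card_finset_len k, Fintype.card_fin]
    have hcpos : (0:ℝ) < (m.choose k : ℝ) := by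
      have : 0 < m.choose k := Nat.choose_pos
        (le_of_lt (lt_of_le_of_lt (Nat.le_self_pow (by norm_num) k) hk3))
      exact_mod_cast this
    have hzc : (m:ℝ) ^ (-((1:ℝ)/8)) / 2 ≤ (2:ℝ) ^ (-h) := by
      have h1 : (2:ℝ) ^ (-h) = (2:ℝ) ^ ((-h : ℤ) : ℝ) := (Real.rpow_intCast 2 (-h)).symm
      rw [h1]
      have h2 : -(Real.logb 2 (m:ℝ) / 8 + 1) ≤ ((-h : ℤ) : ℝ) := by
        push_cast
        have := Int.ceil_lt_add_one (Real.logb 2 (m:ℝ) / 8)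
        rw [hh]
        push_cast
        linarith
      have h3 : (2:ℝ) ^ (-(Real.logb 2 (m:ℝ) / 8 + 1)) ≤ (2:ℝ) ^ ((-h : ℤ) : ℝ) :=
        Real.rpow_le_rpow_of_exponent_le (by norm_num) h2
      have h4 : (2:ℝ) ^ (-(Real.logb 2 (m:ℝ) / 8 + 1))
          = (m:ℝ) ^ (-((1:ℝ)/8)) / 2 := by
        rw [show -(Real.logb 2 (m:ℝ) / 8 + 1)
          = Real.logb 2 (m:ℝ) * (-((1:ℝ)/8)) + (-1) by ring]
        rw [Real.rpow_add (by norm_num : (0:ℝ) < 2)]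
        rw [Real.rpow_mul (by norm_num : (0:ℝ) ≤ 2)]
        rw [Real.rpow_logb (by norm_num) (by norm_num) hm0]
        rw [Real.rpow_neg_one]
        ring
      rw [← h4]
      exact h3
    have hconv : ∀ Z : Finset (KSubset m k),
        (2:ℝ) ^ (-h) * (Fintype.card (KSubset m k) : ℝ) ≤ Z.card →
        (m.choose k : ℝ) ≤ 2 * (m:ℝ) ^ ((1:ℝ)/8) * Z.card := by
      intro Z hZ
      rw [hcard] at hZ
      have h5 : (m:ℝ) ^ (-((1:ℝ)/8)) / 2 * (m.choose k : ℝ) ≤ Z.card := by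
        calc (m:ℝ) ^ (-((1:ℝ)/8)) / 2 * (m.choose k : ℝ)
            ≤ (2:ℝ) ^ (-h) * (m.choose k : ℝ) :=
              mul_le_mul_of_nonneg_right hzc (le_of_lt hcpos)
          _ ≤ Z.card := hZ
      have h6 : (m:ℝ) ^ ((1:ℝ)/8) * (m:ℝ) ^ (-((1:ℝ)/8)) = 1 := by
        rw [← Real.rpow_add hm0]
        norm_num
      have h7 : 2 * (m:ℝ) ^ ((1:ℝ)/8) * ((m:ℝ) ^ (-((1:ℝ)/8)) / 2 * (m.choose k : ℝ))
          = ((m:ℝ) ^ ((1:ℝ)/8) * (m:ℝ) ^ (-((1:ℝ)/8))) * (m.choose k : ℝ) := by ring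
      calc (m.choose k : ℝ)
          = 2 * (m:ℝ) ^ ((1:ℝ)/8) * ((m:ℝ) ^ (-((1:ℝ)/8)) / 2 * (m.choose k : ℝ)) := by
            rw [h7, h6, one_mul]
        _ ≤ 2 * (m:ℝ) ^ ((1:ℝ)/8) * Z.card := by
            apply mul_le_mul_of_nonneg_left h5 (by positivity)
    -- the three counting sets
    set P1 : Finset (Finset (Fin m)) :=
      univ.filter (fun A : Finset (Fin m) => ∃ a ∈ X, a.1 ⊆ A) with hP1
    set P2 : Finset (Finset (Fin m)) :=
      univ.filter (fun A : Finset (Fin m) => ∃ b ∈ Y, b.1 ⊆ Aᶜ) with hP2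
    have hP1card : (19/20 : ℝ) * 2 ^ m ≤ (P1.card : ℝ) :=
      key_count hk1 hk3 hm X (hconv X hXc)
    have hP2card : (19/20 : ℝ) * 2 ^ m ≤ (P2.card : ℝ) := by
      have hbij : P2.card
          = (univ.filter (fun A : Finset (Fin m) => ∃ b ∈ Y, b.1 ⊆ A)).card := by
        apply Finset.card_bij' (fun A _ => Aᶜ) (fun A _ => Aᶜ)
        case hi =>
          intro A hA
          rw [hP2, Finset.mem_filter] at hA
          rw [Finset.mem_filter]
          exact ⟨Finset.mem_univ _, hA.2⟩
        case hj =>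
          intro A hA
          rw [Finset.mem_filter] at hA
          rw [hP2, Finset.mem_filter]
          refine ⟨Finset.mem_univ _, ?_⟩
          obtain ⟨b, hbY, hbA⟩ := hA.2
          exact ⟨b, hbY, by simpa using hbA⟩
        case left_inv =>
          intro A _
          exact compl_compl A
        case right_inv =>
          intro A _
          exact compl_compl A
      rw [hbij]
      exact key_count hk1 hk3 hm Y (hconv Y hYc)
    set G : Finset (Finset (Fin m)) :=
      univ.filter (fun A : Finset (Fin m) =>
        (∃ a ∈ X, a.1 ⊆ A) ∧ (∃ b ∈ Y, b.1 ⊆ Aᶜ)) with hG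
    have hGP : G = P1 ∩ P2 := Finset.filter_and _ _ _
    have hunion : (P1 ∪ P2).card ≤ 2 ^ m := by
      calc (P1 ∪ P2).card ≤ Fintype.card (Finset (Fin m)) := Finset.card_le_univ _
        _ = 2 ^ m := by rw [Fintype.card_finset, Fintype.card_fin]
    have hGcard : (9/10 : ℝ) * 2 ^ m ≤ (G.card : ℝ) := by
      have hie := Finset.card_inter_add_card_union P1 P2
      have : P1.card + P2.card ≤ (P1 ∩ P2).card + 2 ^ m := by omega
      have hR : (P1.card : ℝ) + P2.card ≤ ((P1 ∩ P2).card : ℝ) + 2 ^ m := by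
        exact_mod_cast this
      rw [hGP]
      push_cast
      linarith
    -- lower bound hitProb by G.card / 2^m
    have hfiber : (G.card : ℝ) ≤ ∑ R ∈ univ.filter
        (fun R : Finset (KSubset m k) × Finset (KSubset m k) =>
          (R.1 ∩ X).Nonempty ∧ (R.2 ∩ Y).Nonempty),
        ((univ.filter (fun A : Finset (Fin m) => f A = R)).card : ℝ) := by
      have hmem : ∀ A ∈ G, f A ∈ univ.filter
          (fun R : Finset (KSubset m k) × Finset (KSubset m k) =>
            (R.1 ∩ X).Nonempty ∧ (R.2 ∩ Y).Nonempty) := by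
        intro A hA
        rw [hG, Finset.mem_filter] at hA
        obtain ⟨-, ⟨a, haX, haA⟩, ⟨b, hbY, hbA⟩⟩ := hA
        rw [Finset.mem_filter]
        refine ⟨Finset.mem_univ _, ⟨a, ?_⟩, ⟨b, ?_⟩⟩
        · rw [Finset.mem_inter]
          exact ⟨by simp [hf, haA], haX⟩
        · rw [Finset.mem_inter]
          exact ⟨by simp [hf, hbA], hbY⟩
      have hfw := Finset.card_eq_sum_card_fiberwise hmem
      rw [hfw]
      push_cast
      apply Finset.sum_le_sum
      intro R _
      have hsub : G.filter (fun A => f A = R) ⊆ univ.filter (fun A => f A = R) :=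
        Finset.filter_subset_filter _ (Finset.subset_univ G)
      exact_mod_cast Finset.card_le_card hsub
    have hhit : (G.card : ℝ) / 2 ^ m ≤ hitProb μ X Y := by
      rw [hitProb, hμ]
      rw [← Finset.sum_div]
      gcongr
    have h910 : (9/10 : ℝ) ≤ (G.card : ℝ) / 2 ^ m := by
      rw [le_div_iff₀ h2m]
      linarith
    have : (1:ℝ) - 1/10 = 9/10 := by norm_num
    linarith
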